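/- For every positive integer n, the total number of staircase tableaux of size n equals 4^n · n!. -/

import Mathlib

inductive SLetter : Type
  | A | B | G | D
deriving DecidableEq, Repr

instance instFintypeSLetter : Fintype SLetter :=
  ⟨{SLetter.A, SLetter.B, SLetter.G, SLetter.D}, fun x => by cases x <;> decide⟩

/-- A filling `T` of the staircase Young diagram of shape `(n, n-1, …, 1)`
(boxes `(i,j)` with `i + j < n`, row `i` from the top, column `j` from the left,
diagonal boxes those with `i + j + 1 = n`) is a staircase tableau if:
boxes outside the shape are unused (empty); no diagonal box is empty;
all boxes to the left of a `β` or `δ` in its row are empty;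
all boxes above an `α` or `γ` in its column are empty. -/
def IsStaircase (n : ℕ) (T : Fin n → Fin n → Option SLetter) : Prop :=
  (∀ i j : Fin n, n ≤ (i : ℕ) + (j : ℕ) → T i j = none) ∧
  (∀ i j : Fin n, (i : ℕ) + (j : ℕ) + 1 = n → T i j ≠ none) ∧
  (∀ i j j' : Fin n, j' < j → (T i j = some SLetter.B ∨ T i j = some SLetter.D) →
      T i j' = none) ∧
  (∀ i i' j : Fin n, i' < i → (T i j = some SLetter.A ∨ T i j = some SLetter.G) →
      T i' j = none)

instance (n : ℕ) : DecidablePred (IsStaircase n) := fun T => by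
  unfold IsStaircase; infer_instance

/-- The staircase tableaux of size `n`. -/
def StaircaseTableau (n : ℕ) : Type :=
  {T : Fin n → Fin n → Option SLetter // IsStaircase n T}

instance (n : ℕ) : Fintype (StaircaseTableau n) := Subtype.fintype _

instance (n : ℕ) : DecidableEq (StaircaseTableau n) := Subtype.instDecidableEq

/-- The number of boxes of `T` filled with the symbol `x`. -/
def countLetter (n : ℕ) (T : Fin n → Fin n → Option SLetter) (x : SLetter) : ℕ :=
  (Finset.univ.filter (fun p : Fin n × Fin n => T p.1 p.2 = some x)).card

/-- The label of the nearest labeled box strictly to the right of `(i,j)` in row `i`. -/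
def rightLabel (n : ℕ) (T : Fin n → Fin n → Option SLetter) (i j : Fin n) : Option SLetter :=
  List.findSome? (fun j' => T i j') ((List.finRange n).drop ((j : ℕ) + 1))

/-- The label of the nearest labeled box strictly below `(i,j)` in column `j`. -/
def belowLabel (n : ℕ) (T : Fin n → Fin n → Option SLetter) (i j : Fin n) : Option SLetter :=
  List.findSome? (fun i' => T i' j) ((List.finRange n).drop ((i : ℕ) + 1))

/-- Whether the (empty) box `(i,j)` receives a `q` in the weight of `T`:
an empty box seeing a `δ` to its right gets `q`; an empty box seeing an `α` or `γ` to
its right and a `β` or `γ` below it gets `q`; all other (empty) boxes get `1`. -/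
def boxQ (n : ℕ) (T : Fin n → Fin n → Option SLetter) (i j : Fin n) : Bool :=
  match T i j with
  | some _ => false
  | none =>
    match rightLabel n T i j, belowLabel n T i j with
    | some SLetter.D, _ => true
    | some SLetter.A, some SLetter.B => true
    | some SLetter.A, some SLetter.G => true
    | some SLetter.G, some SLetter.B => true
    | some SLetter.G, some SLetter.G => true
    | _, _ => false

/-- The exponent of `q` in the weight of `T`. -/
def qCount (n : ℕ) (T : Fin n → Fin n → Option SLetter) : ℕ :=
  (Finset.univ.filter (fun p : Fin n × Fin n => boxQ n T p.1 p.2 = true)).card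

/-- The type of `T`, as a word in `Fin n → Bool`, read off the diagonal boxes from
northeast (index `0`) to southwest (index `n-1`): `true` (a `•`) for each `α` or `δ`,
`false` (a `∘`) for each `β` or `γ`. -/
def typeWord (n : ℕ) (T : Fin n → Fin n → Option SLetter) : Fin n → Bool := fun i =>
  match T i ⟨n - 1 - (i : ℕ), by have := i.isLt; omega⟩ with
  | some SLetter.A => true
  | some SLetter.D => true
  | _ => false

/-- `t(T)`, the number of `•`'s in the type of `T`. -/
def bulletCount (n : ℕ) (T : Fin n → Fin n → Option SLetter) : ℕ :=
  (Finset.univ.filter (fun i : Fin n => typeWord n T i = true)).card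

/-- The weight of a staircase tableau: the product of all its labels, with each empty
box contributing `q` or `1` according to the rules (`u` is set to `1`). -/
def stWt {R : Type*} [CommSemiring R] (n : ℕ) (a b g d q : R)
    (T : Fin n → Fin n → Option SLetter) : R :=
  a ^ countLetter n T SLetter.A * b ^ countLetter n T SLetter.B *
    g ^ countLetter n T SLetter.G * d ^ countLetter n T SLetter.D * q ^ qCount n T

/-- The fugacity partition function `Z_n(y; α, β, γ, δ; q) = Σ_T wt(T) y^{t(T)}`,
summed over all staircase tableaux of size `n`. -/
def stZ (R : Type*) [CommSemiring R] (n : ℕ) (y a b g d q : R) : R :=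
  ∑ T : StaircaseTableau n, stWt n a b g d q T.val * y ^ bulletCount n T.val

/-- The generating polynomial `Z_σ(α, β, γ, δ; q)` of staircase tableaux of a given
type `σ` (encoded as a list of booleans, `true` = `•`, `false` = `∘`). -/
def stZw (R : Type*) [CommSemiring R] (w : List Bool) (a b g d q : R) : R :=
  ∑ T ∈ Finset.univ.filter
      (fun T : StaircaseTableau w.length => List.ofFn (typeWord w.length T.val) = w),
    stWt w.length a b g d q T.val


section AuxStaircaseCount
open Finset

def wtL (u v : ℕ) : Option SLetter → ℕ
  | some SLetter.A => u
  | some SLetter.G => u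
  | _ => v

def noBD {m : ℕ} (g : Fin m → Option SLetter) : Prop :=
  ∀ j, g j ≠ some SLetter.B ∧ g j ≠ some SLetter.D

def bdRule {m : ℕ} (g : Fin m → Option SLetter) : Prop :=
  ∀ j j' : Fin m, j' < j → (g j = some SLetter.B ∨ g j = some SLetter.D) → g j' = none

instance {m : ℕ} : DecidablePred (noBD (m := m)) := fun g => by unfold noBD; infer_instance
instance {m : ℕ} : DecidablePred (bdRule (m := m)) := fun g => by unfold bdRule; infer_instance

lemma noBD_bdRule {m : ℕ} {g : Fin m → Option SLetter} (h : noBD g) : bdRule g := by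
  intro j j' _ hbd
  rcases hbd with hb | hb
  · exact absurd hb (h j).1
  · exact absurd hb (h j).2

lemma slsum (F : SLetter → ℕ) : ∑ x : SLetter, F x = F .A + F .B + F .G + F .D := by
  rw [show (univ : Finset SLetter) = {.A, .B, .G, .D} from by decide]
  rw [Finset.sum_insert (by decide), Finset.sum_insert (by decide),
    Finset.sum_insert (by decide), Finset.sum_singleton]
  ring

lemma sum_pi_succ {X : Type} [Fintype X] [DecidableEq X] {m : ℕ} (F : (Fin (m+1) → X) → ℕ) :
    ∑ g : Fin (m+1) → X, F g = ∑ x : X, ∑ t : Fin m → X, F (Fin.cons x t) := by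
  rw [← Equiv.sum_comp (Fin.consEquiv (fun _ : Fin (m+1) => X)) F, Fintype.sum_prod_type]
  rfl

lemma wtL_prod_cons (u v : ℕ) {m : ℕ} (x : Option SLetter) (t : Fin m → Option SLetter) :
    ∏ j : Fin (m+1), wtL u v ((Fin.cons x t : Fin (m+1) → Option SLetter) j)
      = wtL u v x * ∏ j : Fin m, wtL u v (t j) := by
  rw [Fin.prod_univ_succ]
  simp

lemma noBD_cons {m : ℕ} (x : Option SLetter) (t : Fin m → Option SLetter) :
    noBD (Fin.cons x t : Fin (m+1) → Option SLetter)
      ↔ (x ≠ some SLetter.B ∧ x ≠ some SLetter.D) ∧ noBD t := by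
  constructor
  · intro h
    exact ⟨h 0, fun j => by simpa using h j.succ⟩
  · rintro ⟨hx, ht⟩ j
    induction j using Fin.cases with
    | zero => simpa using hx
    | succ i => simpa using ht i

lemma cons_last {m : ℕ} (x : Option SLetter) (t : Fin (m+1) → Option SLetter) :
    (Fin.cons x t : Fin (m+2) → Option SLetter) (Fin.last (m+1)) = t (Fin.last m) := by
  rw [← Fin.succ_last, Fin.cons_succ]

lemma bdRule_cons {m : ℕ} (x : Option SLetter) (t : Fin m → Option SLetter) :
    bdRule (Fin.cons x t : Fin (m+1) → Option SLetter) ↔ bdRule t ∧ (x = none ∨ noBD t) := by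
  constructor
  · intro h
    refine ⟨fun j j' hlt hbd => ?_, ?_⟩
    · have := h j.succ j'.succ (by simpa using hlt) (by simpa using hbd)
      simpa using this
    · by_cases hx : x = none
      · exact Or.inl hx
      · refine Or.inr fun j => ⟨fun hB => ?_, fun hD => ?_⟩
        · have := h j.succ 0 (Fin.succ_pos j) (Or.inl (by simpa using hB))
          simp only [Fin.cons_zero] at this; exact hx this
        · have := h j.succ 0 (Fin.succ_pos j) (Or.inr (by simpa using hD))
          simp only [Fin.cons_zero] at this; exact hx this
  · rintro ⟨ht, hx⟩ j j' hlt hbd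
    induction j using Fin.cases with
    | zero => exact absurd hlt (by simp)
    | succ i =>
      simp only [Fin.cons_succ] at hbd
      have hxnone : x = none := by
        rcases hx with h | h
        · exact h
        · rcases hbd with hb | hb
          · exact absurd hb (h i).1
          · exact absurd hb (h i).2
      induction j' using Fin.cases with
      | zero => simpa using hxnone
      | succ i' =>
        have : i' < i := by rwa [← Fin.succ_lt_succ_iff]
        simpa using ht i i' this hbd

lemma Gsum (u v : ℕ) : ∀ m : ℕ,
    (∑ g : Fin (m+1) → Option SLetter,
      if g (Fin.last m) ≠ none ∧ noBD g then ∏ j, wtL u v (g j) else 0)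
      = 2*u*(2*u+v)^m := by
  intro m
  induction m with
  | zero =>
    rw [sum_pi_succ]
    have h : ∀ x : Option SLetter,
        (∑ t : Fin 0 → Option SLetter,
          if (Fin.cons x t : Fin 1 → Option SLetter) (Fin.last 0) ≠ none
              ∧ noBD (Fin.cons x t : Fin 1 → Option SLetter) then
            ∏ j, wtL u v ((Fin.cons x t : Fin 1 → Option SLetter) j) else 0)
        = if x ≠ none ∧ x ≠ some SLetter.B ∧ x ≠ some SLetter.D then wtL u v x else 0 := by
      intro x
      rw [Fintype.sum_unique]
      have : noBD (default : Fin 0 → Option SLetter) := fun j => j.elim0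
      simp only [noBD_cons, Fin.prod_univ_one, Fin.cons_zero,
        show (Fin.cons x (default : Fin 0 → Option SLetter) : Fin 1 → Option SLetter)
          (Fin.last 0) = x from rfl]
      simp (config := { decide := true }) [this, and_assoc]
    rw [Fintype.sum_congr _ _ h, Fintype.sum_option, slsum]
    simp (config := { decide := true }) only [wtL, ite_true, if_true, ite_false, if_false]
    ring
  | succ m ih =>
    rw [sum_pi_succ]
    have h : ∀ x : Option SLetter,
        (∑ t : Fin (m+1) → Option SLetter,
          if (Fin.cons x t : Fin (m+2) → Option SLetter) (Fin.last (m+1)) ≠ none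
              ∧ noBD (Fin.cons x t : Fin (m+2) → Option SLetter) then
            ∏ j, wtL u v ((Fin.cons x t : Fin (m+2) → Option SLetter) j) else 0)
        = (if x ≠ some SLetter.B ∧ x ≠ some SLetter.D then wtL u v x else 0)
            * (2*u*(2*u+v)^m) := by
      intro x
      rw [← ih, Finset.mul_sum]
      refine Fintype.sum_congr _ _ fun t => ?_
      simp only [cons_last, noBD_cons, wtL_prod_cons]
      by_cases hx : x ≠ some SLetter.B ∧ x ≠ some SLetter.D
      · by_cases htc : t (Fin.last m) ≠ none ∧ noBD t
        · rw [if_pos ⟨htc.1, hx, htc.2⟩, if_pos hx, if_pos htc]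
        · rw [if_neg, if_pos hx, if_neg htc, mul_zero]
          rintro ⟨h1, _, h2⟩; exact htc ⟨h1, h2⟩
      · rw [if_neg, if_neg hx, zero_mul]
        rintro ⟨_, h1, _⟩; exact hx h1
    rw [Fintype.sum_congr _ _ h, ← Finset.sum_mul, Fintype.sum_option, slsum]
    simp (config := { decide := true }) only [wtL, ite_true, if_true, ite_false, if_false]
    ring

lemma Fsum (u v : ℕ) : ∀ m : ℕ,
    (∑ g : Fin (m+1) → Option SLetter,
      if g (Fin.last m) ≠ none ∧ bdRule g then ∏ j, wtL u v (g j) else 0)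
      = (2*u+2*v)*(2*u+v)^m := by
  intro m
  induction m with
  | zero =>
    rw [sum_pi_succ]
    have h : ∀ x : Option SLetter,
        (∑ t : Fin 0 → Option SLetter,
          if (Fin.cons x t : Fin 1 → Option SLetter) (Fin.last 0) ≠ none
              ∧ bdRule (Fin.cons x t : Fin 1 → Option SLetter) then
            ∏ j, wtL u v ((Fin.cons x t : Fin 1 → Option SLetter) j) else 0)
        = if x ≠ none then wtL u v x else 0 := by
      intro x
      rw [Fintype.sum_unique]
      have hbd : ∀ t : Fin 0 → Option SLetter, bdRule (Fin.cons x t : Fin 1 → Option SLetter) := by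
        intro t j j' hlt _
        exact absurd hlt (by omega)
      rw [Fin.prod_univ_one]
      exact if_congr (and_iff_left (hbd _)) rfl rfl
    rw [Fintype.sum_congr _ _ h, Fintype.sum_option, slsum]
    simp (config := { decide := true }) only [wtL, ite_true, if_true, ite_false, if_false]
    ring
  | succ m ih =>
    rw [sum_pi_succ]
    have h : ∀ x : Option SLetter,
        (∑ t : Fin (m+1) → Option SLetter,
          if (Fin.cons x t : Fin (m+2) → Option SLetter) (Fin.last (m+1)) ≠ none
              ∧ bdRule (Fin.cons x t : Fin (m+2) → Option SLetter) then
            ∏ j, wtL u v ((Fin.cons x t : Fin (m+2) → Option SLetter) j) else 0)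
        = (if x = none then v * ((2*u+2*v)*(2*u+v)^m) else
            wtL u v x * (2*u*(2*u+v)^m)) := by
      intro x
      by_cases hx : x = none
      · subst hx
        rw [if_pos rfl, ← ih, Finset.mul_sum]
        refine Fintype.sum_congr _ _ fun t => ?_
        simp only [cons_last, bdRule_cons, wtL_prod_cons]
        by_cases htc : t (Fin.last m) ≠ none ∧ bdRule t
        · rw [if_pos ⟨htc.1, htc.2, Or.inl trivial⟩, if_pos htc]
          rfl
        · rw [if_neg, if_neg htc, mul_zero]
          rintro ⟨h1, h2, _⟩; exact htc ⟨h1, h2⟩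
      · rw [if_neg hx, ← Gsum u v m, Finset.mul_sum]
        refine Fintype.sum_congr _ _ fun t => ?_
        simp only [cons_last, bdRule_cons, wtL_prod_cons]
        by_cases htc : t (Fin.last m) ≠ none ∧ noBD t
        · rw [if_pos ⟨htc.1, noBD_bdRule htc.2, Or.inr htc.2⟩, if_pos htc]
        · rw [if_neg, if_neg htc, mul_zero]
          rintro ⟨h1, h2, h3⟩
          rcases h3 with h3 | h3
          · exact hx h3
          · exact htc ⟨h1, h3⟩
    rw [Fintype.sum_congr _ _ h, Fintype.sum_option]
    rw [if_pos rfl, slsum]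
    simp (config := { decide := true }) only [wtL, ite_true, if_true, ite_false, if_false]
    ring

lemma rowSum (u v N : ℕ) (S : Finset (Fin (N+1))) (hS : Fin.last N ∉ S) :
    (∑ f : Fin (N+1) → Option SLetter,
      if (∀ j ∈ S, f j = none) ∧ f (Fin.last N) ≠ none ∧ bdRule f then
        ∏ j ∈ Sᶜ, wtL u v (f j) else 0)
      = (2*u+2*v)*(2*u+v)^(N - S.card) := by
  have h1 : S.card ≤ N := by
    have hsub : S ⊆ (univ.erase (Fin.last N)) :=
      fun x hx => Finset.mem_erase.2 ⟨fun h => hS (h ▸ hx), mem_univ x⟩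
    have := Finset.card_le_card hsub
    rw [Finset.card_erase_of_mem (mem_univ _), Finset.card_univ, Fintype.card_fin] at this
    omega
  have hcard : Sᶜ.card = (N - S.card) + 1 := by
    rw [Finset.card_compl, Fintype.card_fin]
    omega
  set m := N - S.card with hm
  let e := Sᶜ.orderIsoOfFin hcard
  have hmem : Fin.last N ∈ Sᶜ := Finset.mem_compl.2 hS
  have helast : (e (Fin.last m) : Fin (N+1)) = Fin.last N := by
    by_contra hne
    have hlt : (e (Fin.last m) : Fin (N+1)) < Fin.last N :=
      lt_of_le_of_ne (Fin.le_last _) hne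
    have hle : e.symm ⟨Fin.last N, hmem⟩ ≤ Fin.last m := Fin.le_last _
    have h2 : (⟨Fin.last N, hmem⟩ : {x // x ∈ Sᶜ}) ≤ e (Fin.last m) := by
      rw [← e.apply_symm_apply ⟨Fin.last N, hmem⟩]
      exact e.monotone hle
    exact absurd (Subtype.coe_le_coe.2 h2) (not_le.2 hlt)
  have hesymm : e.symm ⟨Fin.last N, hmem⟩ = Fin.last m := by
    rw [show (⟨Fin.last N, hmem⟩ : {x // x ∈ Sᶜ}) = e (Fin.last m) from Subtype.ext helast.symm]
    exact e.symm_apply_apply _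
  have hF := Fsum u v m
  rw [← Finset.sum_filter] at hF ⊢
  rw [← hF]
  refine Finset.sum_nbij' (fun f => fun i : Fin (m+1) => f (e i))
    (fun g => fun j : Fin (N+1) => if h : j ∈ Sᶜ then g (e.symm ⟨j, h⟩) else none)
    ?_ ?_ ?_ ?_ ?_
  · intro f hf
    rw [Finset.mem_filter] at hf ⊢
    refine ⟨mem_univ _, ?_, ?_⟩
    · dsimp only; rw [helast]; exact hf.2.2.1
    · intro i i' hlt hbdv
      exact hf.2.2.2 (e i) (e i') (Subtype.coe_lt_coe.2 (e.strictMono hlt)) hbdv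
  · intro g hg
    rw [Finset.mem_filter] at hg ⊢
    refine ⟨mem_univ _, fun j hj => dif_neg (by simpa using hj), ?_, ?_⟩
    · dsimp only; rw [dif_pos hmem, hesymm]
      exact hg.2.1
    · intro j j' hlt hbdv
      dsimp only at hbdv ⊢
      by_cases hj : j ∈ Sᶜ
      · rw [dif_pos hj] at hbdv
        by_cases hj' : j' ∈ Sᶜ
        · rw [dif_pos hj']
          refine hg.2.2 _ _ ?_ hbdv
          exact e.symm.strictMono (Subtype.mk_lt_mk.2 hlt)
        · exact dif_neg hj'
      · rw [dif_neg hj] at hbdv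
        rcases hbdv with h | h <;> exact absurd h (by simp)
  · intro f hf
    rw [Finset.mem_filter] at hf
    funext j
    dsimp only
    by_cases hj : j ∈ Sᶜ
    · rw [dif_pos hj]
      congr 1
      exact congrArg Subtype.val (e.apply_symm_apply ⟨j, hj⟩)
    · rw [dif_neg hj]
      exact (hf.2.1 j (by simpa using hj)).symm
  · intro g hg
    funext i
    dsimp only
    rw [dif_pos (e i).2]
    congr 1
    rw [Subtype.coe_eta]
    exact e.symm_apply_apply i
  · intro f hf
    rw [← Finset.prod_coe_sort Sᶜ (fun j => wtL u v (f j))]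
    exact (Equiv.prod_comp e.toEquiv (fun x : {x // x ∈ Sᶜ} => wtL u v (f x))).symm

def colAG (n : ℕ) (T : Fin n → Fin n → Option SLetter) (j : Fin n) : Prop :=
  ∃ i, T i j = some SLetter.A ∨ T i j = some SLetter.G

instance (n : ℕ) (T : Fin n → Fin n → Option SLetter) : DecidablePred (colAG n T) :=
  fun j => by unfold colAG; infer_instance

def cw (u v n : ℕ) (T : Fin n → Fin n → Option SLetter) : ℕ :=
  ∏ j : Fin n, if colAG n T j then u else v

def kst (n : ℕ) (T : Fin n → Fin n → Option SLetter) : ℕ :=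
  (univ.filter (colAG n T)).card

lemma cw_eq_pow (u w n : ℕ) (T : Fin n → Fin n → Option SLetter) :
    cw u w n T = u ^ kst n T * w ^ (n - kst n T) := by
  rw [cw, Finset.prod_ite, Finset.prod_const, Finset.prod_const, kst]
  congr 2
  have := Finset.card_filter_add_card_filter_not
    (s := (univ : Finset (Fin n))) (p := colAG n T)
  rw [Finset.card_univ, Fintype.card_fin] at this
  omega

def SC (n : ℕ) (T' : Fin n → Fin n → Option SLetter) : Finset (Fin (n+1)) :=
  (univ.filter (colAG n T')).map Fin.castSuccEmb

lemma castSucc_mk {n : ℕ} (j : Fin (n+1)) (hj : (j : ℕ) < n) :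
    (⟨(j : ℕ), hj⟩ : Fin n).castSucc = j := Fin.ext (by simp)

lemma mem_SC {n : ℕ} {T' : Fin n → Fin n → Option SLetter} {j : Fin (n+1)} :
    j ∈ SC n T' ↔ ∃ hj : (j : ℕ) < n, colAG n T' ⟨(j : ℕ), hj⟩ := by
  rw [SC, Finset.mem_map]
  constructor
  · rintro ⟨x, hx, rfl⟩
    rw [Finset.mem_filter] at hx
    exact ⟨by simpa using x.isLt, hx.2⟩
  · rintro ⟨hj, hc⟩
    refine ⟨⟨(j : ℕ), hj⟩, Finset.mem_filter.2 ⟨mem_univ _, hc⟩, ?_⟩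
    show (⟨(j : ℕ), hj⟩ : Fin n).castSucc = j
    exact castSucc_mk j hj

lemma SC_card (n : ℕ) (T' : Fin n → Fin n → Option SLetter) : (SC n T').card = kst n T' :=
  Finset.card_map _

lemma last_not_mem_SC (n : ℕ) (T' : Fin n → Fin n → Option SLetter) :
    Fin.last n ∉ SC n T' := by
  rw [mem_SC]
  rintro ⟨hj, -⟩
  simp at hj

def restrictT (n : ℕ) (T : Fin (n+1) → Fin (n+1) → Option SLetter) :
    Fin n → Fin n → Option SLetter := fun i j => T i.succ j.castSucc

def glueT (n : ℕ) (T' : Fin n → Fin n → Option SLetter) (f : Fin (n+1) → Option SLetter) :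
    Fin (n+1) → Fin (n+1) → Option SLetter :=
  Fin.cases f (fun i' => fun j : Fin (n+1) =>
    if hj : (j : ℕ) < n then T' i' ⟨(j : ℕ), hj⟩ else none)

lemma glueT_zero_apply (n : ℕ) (T' : Fin n → Fin n → Option SLetter)
    (f : Fin (n+1) → Option SLetter) (j : Fin (n+1)) : glueT n T' f 0 j = f j := by
  rw [glueT, Fin.cases_zero]

lemma glueT_succ_apply (n : ℕ) (T' : Fin n → Fin n → Option SLetter)
    (f : Fin (n+1) → Option SLetter) (i' : Fin n) (j : Fin (n+1)) :
    glueT n T' f i'.succ j = if hj : (j : ℕ) < n then T' i' ⟨(j : ℕ), hj⟩ else none := by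
  rw [glueT, Fin.cases_succ]

lemma isStaircase_restrict {n : ℕ} {T : Fin (n+1) → Fin (n+1) → Option SLetter}
    (h : IsStaircase (n+1) T) : IsStaircase n (restrictT n T) := by
  obtain ⟨h1, h2, h3, h4⟩ := h
  refine ⟨fun i j hij => h1 i.succ j.castSucc
      (by simp only [Fin.val_succ, Fin.coe_castSucc]; omega),
    fun i j hij => h2 i.succ j.castSucc
      (by simp only [Fin.val_succ, Fin.coe_castSucc]; omega),
    fun i j j' hlt hbd => h3 i.succ j.castSucc j'.castSucc (by simpa) hbd,
    fun i i' j hlt hag => h4 i.succ i'.succ j.castSucc (by simpa) hag⟩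

lemma rowCond_of {n : ℕ} {T : Fin (n+1) → Fin (n+1) → Option SLetter}
    (h : IsStaircase (n+1) T) :
    (∀ j ∈ SC n (restrictT n T), T 0 j = none) ∧ T 0 (Fin.last n) ≠ none
      ∧ bdRule (fun j => T 0 j) := by
  obtain ⟨h1, h2, h3, h4⟩ := h
  refine ⟨?_, ?_, ?_⟩
  · intro j hj
    rw [mem_SC] at hj
    obtain ⟨hjn, i, hAG⟩ := hj
    refine h4 i.succ 0 j (Fin.succ_pos i) ?_
    have hcs : (⟨(j : ℕ), hjn⟩ : Fin n).castSucc = j := castSucc_mk j hjn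
    rw [← hcs]
    exact hAG
  · exact h2 0 (Fin.last n) (by simp)
  · exact fun j j' hlt hbd => h3 0 j j' hlt hbd

lemma isStaircase_glue {n : ℕ} {T' : Fin n → Fin n → Option SLetter}
    {f : Fin (n+1) → Option SLetter} (hT' : IsStaircase n T')
    (hf : (∀ j ∈ SC n T', f j = none) ∧ f (Fin.last n) ≠ none ∧ bdRule f) :
    IsStaircase (n+1) (glueT n T' f) := by
  obtain ⟨h1, h2, h3, h4⟩ := hT'
  obtain ⟨hf1, hf2, hf3⟩ := hf
  refine ⟨?_, ?_, ?_, ?_⟩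
  · intro i j hij
    induction i using Fin.cases with
    | zero =>
      have := j.isLt
      simp only [Fin.val_zero] at hij
      omega
    | succ i' =>
      rw [glueT_succ_apply]
      by_cases hj : (j : ℕ) < n
      · rw [dif_pos hj]
        refine h1 i' ⟨(j : ℕ), hj⟩ ?_
        simp only [Fin.val_succ] at hij
        simp only []
        omega
      · rw [dif_neg hj]
  · intro i j hij
    induction i using Fin.cases with
    | zero =>
      have hjl : j = Fin.last n := by
        ext
        simp only [Fin.val_zero] at hij
        simp [Fin.last]
        omega
      rw [glueT_zero_apply, hjl]
      exact hf2
    | succ i' =>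
      have hj : (j : ℕ) < n := by
        simp only [Fin.val_succ] at hij
        omega
      rw [glueT_succ_apply, dif_pos hj]
      refine h2 i' ⟨(j : ℕ), hj⟩ ?_
      simp only [Fin.val_succ] at hij
      simp only []
      omega
  · intro i j j' hlt hbd
    induction i using Fin.cases with
    | zero =>
      rw [glueT_zero_apply] at hbd ⊢
      exact hf3 j j' hlt hbd
    | succ i' =>
      rw [glueT_succ_apply] at hbd ⊢
      by_cases hj : (j : ℕ) < n
      · rw [dif_pos hj] at hbd
        have hj' : (j' : ℕ) < n := by
          have : (j' : ℕ) < (j : ℕ) := hlt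
          omega
        rw [dif_pos hj']
        refine h3 i' ⟨(j : ℕ), hj⟩ ⟨(j' : ℕ), hj'⟩ ?_ hbd
        show (j' : ℕ) < (j : ℕ)
        exact hlt
      · rw [dif_neg hj] at hbd
        rcases hbd with h | h <;> cases h
  · intro i i' j hlt hag
    induction i using Fin.cases with
    | zero => exact absurd hlt (Fin.not_lt_zero _)
    | succ i₀ =>
      rw [glueT_succ_apply] at hag
      by_cases hj : (j : ℕ) < n
      · rw [dif_pos hj] at hag
        induction i' using Fin.cases with
        | zero =>
          rw [glueT_zero_apply]
          exact hf1 j (mem_SC.2 ⟨hj, ⟨i₀, hag⟩⟩)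
        | succ i₁ =>
          rw [glueT_succ_apply, dif_pos hj]
          refine h4 i₀ i₁ ⟨(j : ℕ), hj⟩ ?_ hag
          rwa [← Fin.succ_lt_succ_iff]
      · rw [dif_neg hj] at hag
        rcases hag with h | h <;> cases h

lemma glue_restrict {n : ℕ} {T : Fin (n+1) → Fin (n+1) → Option SLetter}
    (h : IsStaircase (n+1) T) :
    glueT n (restrictT n T) (fun j => T 0 j) = T := by
  funext i j
  induction i using Fin.cases with
  | zero => rw [glueT_zero_apply]
  | succ i' =>
    rw [glueT_succ_apply]
    by_cases hj : (j : ℕ) < n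
    · rw [dif_pos hj]
      show T i'.succ (⟨(j : ℕ), hj⟩ : Fin n).castSucc = T i'.succ j
      rw [castSucc_mk j hj]
    · rw [dif_neg hj]
      refine (h.1 i'.succ j ?_).symm
      have := j.isLt
      simp only [Fin.val_succ]
      omega

lemma restrict_glue (n : ℕ) (T' : Fin n → Fin n → Option SLetter)
    (f : Fin (n+1) → Option SLetter) : restrictT n (glueT n T' f) = T' := by
  funext i j
  show glueT n T' f i.succ j.castSucc = T' i j
  rw [glueT_succ_apply, dif_pos (by simpa using j.isLt : ((j.castSucc : ℕ) < n))]
  exact congrArg (T' i) (Fin.ext (by simp))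

lemma cw_glue_split {n : ℕ} (u v : ℕ) {T : Fin (n+1) → Fin (n+1) → Option SLetter}
    (h : IsStaircase (n+1) T) :
    cw u v (n+1) T = u ^ kst n (restrictT n T)
      * ∏ j ∈ (SC n (restrictT n T))ᶜ, wtL u v (T 0 j) := by
  rw [cw, ← Finset.prod_mul_prod_compl (SC n (restrictT n T))]
  congr 1
  · have hall : ∀ j ∈ SC n (restrictT n T), (if colAG (n+1) T j then u else v) = u := by
      intro j hj
      rw [mem_SC] at hj
      obtain ⟨hjn, i, hAG⟩ := hj
      refine if_pos ⟨i.succ, ?_⟩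
      have hcs : (⟨(j : ℕ), hjn⟩ : Fin n).castSucc = j := castSucc_mk j hjn
      rw [← hcs]
      exact hAG
    rw [Finset.prod_congr rfl hall, Finset.prod_const, SC_card]
  · refine Finset.prod_congr rfl fun j hj => ?_
    rw [Finset.mem_compl] at hj
    have hiff : colAG (n+1) T j ↔ (T 0 j = some SLetter.A ∨ T 0 j = some SLetter.G) := by
      constructor
      · rintro ⟨i, hAG⟩
        induction i using Fin.cases with
        | zero => exact hAG
        | succ i' =>
          by_cases hj2 : (j : ℕ) < n
          · exfalso
            refine hj (mem_SC.2 ⟨hj2, ⟨i', ?_⟩⟩)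
            show restrictT n T i' ⟨(j : ℕ), hj2⟩ = _ ∨ restrictT n T i' ⟨(j : ℕ), hj2⟩ = _
            rw [restrictT]
            rw [castSucc_mk j hj2]
            exact hAG
          · have : T i'.succ j = none := by
              refine h.1 i'.succ j ?_
              have := j.isLt
              simp only [Fin.val_succ]
              omega
            rw [this] at hAG
            rcases hAG with h' | h' <;> cases h'
      · intro h'
        exact ⟨0, h'⟩
    by_cases hc : colAG (n+1) T j
    · rw [if_pos hc]
      rcases hiff.1 hc with h1 | h1 <;> rw [h1] <;> rfl
    · rw [if_neg hc]
      have hA : T 0 j ≠ some SLetter.A := fun hh => hc (hiff.2 (Or.inl hh))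
      have hG : T 0 j ≠ some SLetter.G := fun hh => hc (hiff.2 (Or.inr hh))
      cases hT0 : T 0 j with
      | none => rfl
      | some a =>
        cases a
        · exact absurd hT0 hA
        · rfl
        · exact absurd hT0 hG
        · rfl

lemma key : ∀ (n u v : ℕ),
    (∑ T ∈ univ.filter (IsStaircase n), cw u v n T)
      = ∏ j ∈ Finset.range n, (2*v+(4*j+2)*u) := by
  intro n
  induction n with
  | zero =>
    intro u v
    have huniv : (univ.filter (IsStaircase 0))
        = {fun (i : Fin 0) (_ : Fin 0) => (none : Option SLetter)} := by
      apply Finset.eq_singleton_iff_unique_mem.2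
      refine ⟨Finset.mem_filter.2 ⟨mem_univ _,
        ⟨fun i => i.elim0, fun i => i.elim0, fun i => i.elim0, fun i => i.elim0⟩⟩, ?_⟩
      intro T _
      funext i
      exact i.elim0
    rw [huniv, Finset.sum_singleton]
    simp [cw]
  | succ n ih =>
    intro u v
    have hstep : (∑ T ∈ univ.filter (IsStaircase (n+1)), cw u v (n+1) T)
        = ∑ p ∈ (univ.filter (IsStaircase n)).sigma
            (fun T' => univ.filter (fun f : Fin (n+1) → Option SLetter =>
              (∀ j ∈ SC n T', f j = none) ∧ f (Fin.last n) ≠ none ∧ bdRule f)),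
          u ^ kst n p.1 * ∏ j ∈ (SC n p.1)ᶜ, wtL u v (p.2 j) := by
      refine Finset.sum_nbij' (fun T => ⟨restrictT n T, fun j => T 0 j⟩)
        (fun p => glueT n p.1 p.2) ?_ ?_ ?_ ?_ ?_
      · intro T hT
        rw [Finset.mem_filter] at hT
        rw [Finset.mem_sigma]
        exact ⟨Finset.mem_filter.2 ⟨mem_univ _, isStaircase_restrict hT.2⟩,
          Finset.mem_filter.2 ⟨mem_univ _, rowCond_of hT.2⟩⟩
      · intro p hp
        rw [Finset.mem_sigma, Finset.mem_filter, Finset.mem_filter] at hp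
        exact Finset.mem_filter.2 ⟨mem_univ _, isStaircase_glue hp.1.2 hp.2.2⟩
      · intro T hT
        rw [Finset.mem_filter] at hT
        exact glue_restrict hT.2
      · intro p hp
        obtain ⟨T', f⟩ := p
        dsimp only
        have h2 : (fun j => glueT n T' f 0 j) = f := funext (glueT_zero_apply n T' f)
        exact Sigma.ext (restrict_glue n T' f) (heq_of_eq h2)
      · intro T hT
        rw [Finset.mem_filter] at hT
        exact cw_glue_split u v hT.2
    rw [hstep, Finset.sum_sigma]
    have hrow : ∀ T' ∈ univ.filter (IsStaircase n),
        (∑ f ∈ univ.filter (fun f : Fin (n+1) → Option SLetter =>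
            (∀ j ∈ SC n T', f j = none) ∧ f (Fin.last n) ≠ none ∧ bdRule f),
          u ^ kst n T' * ∏ j ∈ (SC n T')ᶜ, wtL u v (f j))
        = (2*u+2*v) * (u ^ kst n T' * (2*u+v)^(n - kst n T')) := by
      intro T' _
      rw [← Finset.mul_sum]
      have hr := rowSum u v n (SC n T') (last_not_mem_SC n T')
      rw [← Finset.sum_filter] at hr
      rw [hr, SC_card]
      ring
    rw [Finset.sum_congr rfl hrow, ← Finset.mul_sum]
    have hcw : ∀ T' ∈ univ.filter (IsStaircase n),
        u ^ kst n T' * (2*u+v)^(n - kst n T') = cw u (2*u+v) n T' := by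
      intro T' _
      rw [cw_eq_pow]
    rw [Finset.sum_congr rfl hcw, ih u (2*u+v)]
    rw [Finset.prod_range_succ']
    rw [mul_comm]
    congr 1
    · refine Finset.prod_congr rfl fun j _ => by ring
    · ring

end AuxStaircaseCount

/-- For every positive integer `n`, the total number of staircase tableaux of size `n`
equals `4^n · n!`. -/
theorem card_staircaseTableau (n : ℕ) (hn : 1 ≤ n) :
    Fintype.card (StaircaseTableau n) = 4 ^ n * n.factorial := by
  have h1 : Fintype.card (StaircaseTableau n)
      = (Finset.univ.filter (IsStaircase n)).card := Fintype.card_subtype _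
  have h2 := key n 1 1
  have h3 : ∀ T ∈ Finset.univ.filter (IsStaircase n), cw 1 1 n T = 1 := by
    intro T _
    rw [cw]
    simp
  rw [Finset.sum_congr rfl h3, Finset.sum_const, smul_eq_mul, mul_one] at h2
  rw [h1, h2]
  calc ∏ j ∈ Finset.range n, (2*1+(4*j+2)*1)
      = ∏ j ∈ Finset.range n, 4*(j+1) := Finset.prod_congr rfl fun j _ => by ring
    _ = 4^n * n.factorial := by
        rw [Finset.prod_mul_distrib, Finset.prod_const, Finset.card_range,
          Finset.prod_range_add_one_eq_factorial]
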